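/- Let H be a finite simple graph, i ≥ 0 and j ≥ 1. (i) If h : B_s(2i,1) → H is a graph homomorphism, then the map ĥ defined by ĥ(x,y) = h(x, y mod 2) is a graph homomorphism from B_s(2i,j) to H. (ii) If h : B_s(2i,1) → H is a graph homomorphism, then the map ĥ' defined by ĥ'(x,y) = h(x, 1 − (y mod 2)) is a graph homomorphism from B_d(2i,j) to H. -/

import Mathlib

/-- Vertices of the brick `B_s(i,j)`: points of `ℤ²` in the box with equal parities. -/
abbrev BsVerts (i j : ℤ) : Type :=
  {p : ℤ × ℤ // 0 ≤ p.1 ∧ p.1 ≤ i ∧ 0 ≤ p.2 ∧ p.2 ≤ j ∧ p.1 % 2 = p.2 % 2}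

/-- Vertices of the brick `B_d(i,j)`: points of `ℤ²` in the box with different parities. -/
abbrev BdVerts (i j : ℤ) : Type :=
  {p : ℤ × ℤ // 0 ≤ p.1 ∧ p.1 ≤ i ∧ 0 ≤ p.2 ∧ p.2 ≤ j ∧ p.1 % 2 ≠ p.2 % 2}

/-- The brick `B_s(i,j)`; edges join points at distance 1 in both coordinates. -/
def Bs (i j : ℤ) : SimpleGraph (BsVerts i j) where
  Adj u v := |u.val.1 - v.val.1| = 1 ∧ |u.val.2 - v.val.2| = 1
  symm := by
    constructor
    intro u v h
    exact ⟨by rw [abs_sub_comm]; exact h.1, by rw [abs_sub_comm]; exact h.2⟩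
  loopless := by constructor; intro u h; simp at h

/-- The brick `B_d(i,j)`; edges join points at distance 1 in both coordinates. -/
def Bd (i j : ℤ) : SimpleGraph (BdVerts i j) where
  Adj u v := |u.val.1 - v.val.1| = 1 ∧ |u.val.2 - v.val.2| = 1
  symm := by
    constructor
    intro u v h
    exact ⟨by rw [abs_sub_comm]; exact h.1, by rw [abs_sub_comm]; exact h.2⟩
  loopless := by constructor; intro u h; simp at h

/-- (i) `ĥ(x,y) = h(x, y mod 2)` is a homomorphism `B_s(2i,j) → H`;
(ii) `ĥ'(x,y) = h(x, 1 - (y mod 2))` is a homomorphism `B_d(2i,j) → H`. -/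
theorem brick_periodic_extension {V : Type} [Fintype V] (H : SimpleGraph V)
    (i j : ℕ) (hj : 1 ≤ j) (h : Bs (2 * (i : ℤ)) 1 →g H) :
    (∀ u v : BsVerts (2 * (i : ℤ)) (j : ℤ), (Bs (2 * (i : ℤ)) (j : ℤ)).Adj u v →
      H.Adj (h ⟨(u.val.1, u.val.2 % 2), by have := u.2; omega⟩)
            (h ⟨(v.val.1, v.val.2 % 2), by have := v.2; omega⟩)) ∧
    (∀ u v : BdVerts (2 * (i : ℤ)) (j : ℤ), (Bd (2 * (i : ℤ)) (j : ℤ)).Adj u v →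
      H.Adj (h ⟨(u.val.1, 1 - u.val.2 % 2), by have := u.2; omega⟩)
            (h ⟨(v.val.1, 1 - v.val.2 % 2), by have := v.2; omega⟩)) := by
  constructor
  · intro u v ⟨h1, h2⟩
    rw [abs_eq (by norm_num : (0:ℤ) ≤ 1)] at h2
    exact h.map_adj ⟨h1, show |u.val.2 % 2 - v.val.2 % 2| = 1 by
      rw [abs_eq (by norm_num : (0:ℤ) ≤ 1)]; omega⟩
  · intro u v ⟨h1, h2⟩
    rw [abs_eq (by norm_num : (0:ℤ) ≤ 1)] at h2
    exact h.map_adj ⟨h1, show |(1 - u.val.2 % 2) - (1 - v.val.2 % 2)| = 1 by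
      rw [abs_eq (by norm_num : (0:ℤ) ≤ 1)]; omega⟩
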